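/- Let w ∈ αΣ* ∩ Σ*‾α be non-α-crossing. Then the factor w occurs exactly once in every word belonging to the iterated hairpin completion H*_α(w). -/
import Mathlib


open List

namespace Hairpin

variable {S : Type} [DecidableEq S]

/-- Antimorphic extension of an involution to words. -/
def comp (bar : S → S) (w : List S) : List S := (w.map bar).reverse

/-- Right hairpin completion w.r.t. primer `a`. -/
def RH (bar : S → S) (a w z : List S) : Prop :=
  ∃ γ β : List S, w = γ ++ a ++ β ++ comp bar a ∧ z = w ++ comp bar γ

/-- Left hairpin completion w.r.t. primer `a`. -/
def LH (bar : S → S) (a w z : List S) : Prop :=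
  ∃ γ β : List S, w = a ++ β ++ comp bar a ++ comp bar γ ∧ z = γ ++ w

/-- One hairpin completion step. -/
def HC (bar : S → S) (a w z : List S) : Prop := RH bar a w z ∨ LH bar a w z

/-- Iterated hairpin completion `H*_α(w)`. -/
def HCstar (bar : S → S) (a w : List S) : Set (List S) :=
  { z | Relation.ReflTransGen (HC bar a) w z }

/-- `w` is non-`a`-crossing: every occurrence of `a` starts no later than
every occurrence of `comp bar a`. -/
def NonCrossing (bar : S → S) (a w : List S) : Prop :=
  ∀ i j : ℕ, a <+: w.drop i → comp bar a <+: w.drop j → i ≤ j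

/-- The set of `a`-prefixes of `w`. -/
def Pa (a w : List S) : Set (List S) := { u | u ++ a <+: w }

/-- The set of `‾a`-suffixes of `w` (the elements are the words `‾v`). -/
def Sa (bar : S → S) (a w : List S) : Set (List S) :=
  { x | comp bar a ++ x <:+ w }

/-- The set of complements of `‾a`-suffixes of `w`, i.e. `‾(S_‾α(w))`. -/
def barSa (bar : S → S) (a w : List S) : Set (List S) :=
  { v | comp bar a ++ comp bar v <:+ w }

/-- Kleene star of a set of words: all finite concatenations. -/
def star (X : Set (List S)) : Set (List S) :=
  { x | ∃ l : List (List S), (∀ y ∈ l, y ∈ X) ∧ x = l.flatten }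

/-- `ind_α(x)`: the number of occurrences of `a` in `x ++ a` other than the
suffix occurrence, i.e. the number of positions `i < |x|` where `a` occurs. -/
def inda (a x : List S) : ℕ :=
  ((Finset.range x.length).filter (fun i => a <+: (x ++ a).drop i)).card


/-! ### Auxiliary lemmas -/

lemma comp_append (bar : S → S) (x y : List S) :
    comp bar (x ++ y) = comp bar y ++ comp bar x := by
  simp [comp]

lemma comp_length (bar : S → S) (x : List S) : (comp bar x).length = x.length := by
  simp [comp]

lemma comp_comp (bar : S → S) (hbar : Function.Involutive bar) (x : List S) :
    comp bar (comp bar x) = x := by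
  simp [comp, List.map_reverse, List.map_map, hbar.comp_self]

lemma occ_elim {u z : List S} {i : ℕ} (hu : u ≠ []) (h : u <+: z.drop i) :
    ∃ s t : List S, z = s ++ u ++ t ∧ s.length = i := by
  have hi : i ≤ z.length := by
    by_contra hlt
    push_neg at hlt
    rw [List.drop_eq_nil_of_le (le_of_lt hlt)] at h
    exact hu (List.prefix_nil.mp h)
  obtain ⟨t, ht⟩ := h
  refine ⟨z.take i, t, ?_, by simp [hi]⟩
  rw [List.append_assoc, ht, List.take_append_drop]

lemma occ_intro {u z s t : List S} (h : z = s ++ u ++ t) : u <+: z.drop s.length := by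
  subst h
  rw [List.append_assoc, List.drop_left]
  exact ⟨t, rfl⟩

lemma prefix_of_append {u v t : List S} (h : u <+: v ++ t) (hl : u.length ≤ v.length) :
    u <+: v := by
  obtain ⟨r, hr⟩ := h
  have h1 : (v ++ t).take u.length = u := by
    rw [← hr, List.take_left]
  rw [List.take_append, Nat.sub_eq_zero_of_le hl, List.take_zero,
    List.append_nil] at h1
  exact h1 ▸ List.take_prefix _ _

lemma prefix_take {u l : List S} {n : ℕ} (h : u <+: l) (hn : u.length ≤ n) :
    u <+: l.take n := by
  obtain ⟨t, ht⟩ := h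
  rw [← ht, List.take_append, List.take_of_length_le hn]
  exact List.prefix_append _ _

lemma occ_append_right {u z y : List S} {i : ℕ} (h : u <+: z.drop i) :
    u <+: (z ++ y).drop i := by
  rw [List.drop_append]
  exact h.trans (List.prefix_append _ _)

lemma occ_prefix_ext {u x z : List S} {k : ℕ} (h : u <+: x.drop k) (hx : x <+: z) :
    u <+: z.drop k := by
  obtain ⟨r, hr⟩ := hx
  rw [← hr]
  exact occ_append_right h

lemma occ_lift {u w z s t : List S} {k : ℕ} (h : u <+: w.drop k) (hz : z = s ++ w ++ t) :
    u <+: z.drop (s.length + k) := by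
  subst hz
  rw [List.append_assoc, List.drop_append,
    List.drop_eq_nil_of_le (by omega), List.nil_append, Nat.add_sub_cancel_left]
  exact occ_append_right h

lemma nc_RH (bar : S → S) (hbar : Function.Involutive bar) {a z γ β : List S}
    (ha : a ≠ []) (hz : NonCrossing bar a z)
    (hd : z = γ ++ a ++ β ++ comp bar a) :
    NonCrossing bar a (z ++ comp bar γ) := by
  -- claim: any a-occurrence in z ++ comp γ lies entirely within z
  have key : ∀ i, a <+: (z ++ comp bar γ).drop i → i + a.length ≤ z.length := by
    intro i hi
    by_contra hgt
    push_neg at hgt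
    obtain ⟨s, t, hst, hsl⟩ := occ_elim ha hi
    set pre := γ ++ a ++ β with hpre
    have hz' : z ++ comp bar γ = pre ++ comp bar (γ ++ a) := by
      rw [hd, comp_append]
      simp [List.append_assoc]
    have hlen_pre : pre.length + a.length = z.length := by
      have := congrArg List.length hd
      simp [comp_length, List.length_append] at this ⊢
      omega
    have hslen : pre.length ≤ s.length := by omega
    have hkey : comp bar (γ ++ a) = s.drop pre.length ++ a ++ t := by
      have h0 := congrArg (List.drop pre.length) (hz'.symm.trans hst)
      rwa [List.drop_left, List.append_assoc, List.drop_append,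
        Nat.sub_eq_zero_of_le hslen, List.drop_zero, ← List.append_assoc] at h0
    have hflip : γ ++ a = comp bar t ++ comp bar a ++ comp bar (s.drop pre.length) := by
      have h0 := congrArg (comp bar) hkey
      rwa [comp_comp bar hbar, comp_append, comp_append, ← List.append_assoc] at h0
    have hc_occ : comp bar a <+: (γ ++ a).drop (comp bar t).length := occ_intro hflip
    have hc_z : comp bar a <+: z.drop t.length := by
      have hpref : (γ ++ a) <+: z := ⟨β ++ comp bar a, by rw [hd]; simp [hpre, List.append_assoc]⟩
      have h0 := occ_prefix_ext hc_occ hpref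
      rwa [comp_length] at h0
    have ha_z : a <+: z.drop γ.length :=
      occ_intro (show z = γ ++ a ++ (β ++ comp bar a) by rw [hd]; simp [hpre, List.append_assoc])
    have hγt := hz _ _ ha_z hc_z
    have hlen := congrArg List.length hkey
    simp [comp_length, List.length_append, List.length_drop] at hlen
    omega
  intro i j hi hj
  have hi' := key i hi
  have hiz : a <+: z.drop i := by
    rw [List.drop_append] at hi
    exact prefix_of_append hi (by rw [List.length_drop]; omega)
  by_cases hjc : j + a.length ≤ z.length
  · have hjz : comp bar a <+: z.drop j := by
      rw [List.drop_append] at hj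
      refine prefix_of_append hj ?_
      rw [List.length_drop, comp_length]; omega
    exact hz _ _ hiz hjz
  · push_neg at hjc
    omega

lemma nc_comp (bar : S → S) (hbar : Function.Involutive bar) {a z : List S} (ha : a ≠ [])
    (hz : NonCrossing bar a z) : NonCrossing bar a (comp bar z) := by
  have hc_ne : comp bar a ≠ [] := by
    intro h
    apply ha
    have := congrArg (comp bar) h
    rw [comp_comp bar hbar] at this
    simpa [comp] using this
  intro i j hi hj
  obtain ⟨s, t, hst, hsl⟩ := occ_elim ha hi
  obtain ⟨s', t', hst', hsl'⟩ := occ_elim hc_ne hj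
  have h1 : z = comp bar t ++ comp bar a ++ comp bar s := by
    have h0 := congrArg (comp bar) hst
    rwa [comp_comp bar hbar, comp_append, comp_append, ← List.append_assoc] at h0
  have h2 : z = comp bar t' ++ a ++ comp bar s' := by
    have h0 := congrArg (comp bar) hst'
    rwa [comp_comp bar hbar, comp_append, comp_append, comp_comp bar hbar,
      ← List.append_assoc] at h0
  have hle := hz _ _ (occ_intro h2) (occ_intro h1)
  have l1 := congrArg List.length hst
  have l2 := congrArg List.length hst'
  simp only [comp_length, List.length_append] at l1 l2 hle
  omega

lemma lh_comp (bar : S → S) (hbar : Function.Involutive bar) {a z z' : List S}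
    (h : LH bar a z z') : RH bar a (comp bar z) (comp bar z') := by
  obtain ⟨γ, β, h1, h2⟩ := h
  refine ⟨γ, comp bar β, ?_, ?_⟩
  · rw [h1]
    simp [comp_append, comp_comp bar hbar, List.append_assoc]
  · rw [h2, comp_append]

lemma nc_HC (bar : S → S) (hbar : Function.Involutive bar) {a z z' : List S}
    (ha : a ≠ []) (hz : NonCrossing bar a z) (h : HC bar a z z') :
    NonCrossing bar a z' := by
  rcases h with h | h
  · obtain ⟨γ, β, h1, h2⟩ := h
    subst h2
    exact nc_RH bar hbar ha hz h1
  · obtain ⟨γ, β, h1, h2⟩ := lh_comp bar hbar h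
    have h3 := nc_RH bar hbar ha (nc_comp bar hbar ha hz) h1
    rw [← h2] at h3
    have h4 := nc_comp bar hbar ha h3
    rwa [comp_comp bar hbar] at h4

lemma no_double (bar : S → S) (hbar : Function.Involutive bar) {a w z : List S}
    (ha : a ≠ []) (hp : a <+: w) (hs : comp bar a <:+ w)
    (hz : NonCrossing bar a z) {i i' : ℕ}
    (h1 : w <+: z.drop i) (h2 : w <+: z.drop i') (hlt : i < i') : False := by
  have hw_ne : w ≠ [] := fun h => ha (List.prefix_nil.mp (h ▸ hp))
  have haw : a.length ≤ w.length := hp.length_le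
  have ha_pos : 0 < a.length := List.length_pos_iff.mpr ha
  obtain ⟨p, hpw⟩ := hs
  set M := p.length with hM
  have hMa : M + a.length = w.length := by
    have := congrArg List.length hpw
    simp only [List.length_append, comp_length] at this
    omega
  have hcM : comp bar a <+: w.drop M :=
    occ_intro (show w = p ++ comp bar a ++ [] by rw [List.append_nil, hpw])
  obtain ⟨s1, t1, hz1, hl1⟩ := occ_elim hw_ne h1
  have lift : ∀ (u : List S) (k : ℕ), u <+: w.drop k → u <+: z.drop (i + k) := by
    intro u k hu
    have h0 := occ_lift hu hz1
    rwa [hl1] at h0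
  have haz : a <+: z.drop i' := hp.trans h2
  have hcz : comp bar a <+: z.drop (i + M) := lift _ _ hcM
  have hover : i' ≤ i + M := hz _ _ haz hcz
  set d := i' - i with hdd
  have hd1 : 1 ≤ d := by omega
  have hdM : d ≤ M := by omega
  -- z.drop i' = w.drop d ++ t1
  have hzi : z.drop i = w ++ t1 := by
    rw [hz1, List.append_assoc, ← hl1, List.drop_left]
  have hz2 : z.drop i' = w.drop d ++ t1 := by
    have e : z.drop i' = (z.drop i).drop d := by
      rw [List.drop_drop]; congr 1; omega
    rw [e, hzi, List.drop_append,
      Nat.sub_eq_zero_of_le (by omega), List.drop_zero]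
  -- the period of w
  have hper : w.drop d = w.take (w.length - d) := by
    have hpre : w <+: w.drop d ++ t1 := by rw [← hz2]; exact h2
    obtain ⟨t2, ht2⟩ := hpre
    have e0 := congrArg (List.take (w.length - d)) ht2
    have e1 : (w.drop d ++ t1).take (w.length - d) = w.drop d := by
      rw [List.take_append, List.take_of_length_le (by simp),
        List.length_drop, Nat.sub_self, List.take_zero, List.append_nil]
    have e2 : (w ++ t2).take (w.length - d) = w.take (w.length - d) := by
      rw [List.take_append, Nat.sub_eq_zero_of_le (Nat.sub_le _ _),
        List.take_zero, List.append_nil]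
    rw [e1, e2] at e0
    exact e0.symm
  have hstep_a : ∀ k, a <+: w.drop k → k + d + a.length ≤ w.length →
      a <+: w.drop (k + d) := by
    intro k hk hkd
    have e : w.drop (k + d) = (w.drop k).take (w.length - d - k) := by
      rw [show k + d = d + k from Nat.add_comm k d, ← List.drop_drop, hper, List.drop_take]
    rw [e]
    exact prefix_take hk (by omega)
  have hstep_c : ∀ k, comp bar a <+: w.drop k → d ≤ k →
      comp bar a <+: w.drop (k - d) := by
    intro k hk hdk
    have e : w.drop k = (w.drop (k - d)).take (w.length - k) := by
      have e0 : w.drop k = (w.drop d).drop (k - d) := by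
        rw [List.drop_drop]; congr 1; omega
      rw [e0, hper, List.drop_take]
      congr 1
      omega
    rw [e] at hk
    exact hk.trans (List.take_prefix _ _)
  have ind_a : ∀ j, j * d + a.length ≤ w.length → a <+: w.drop (j * d) := by
    intro j
    induction j with
    | zero => intro _; simpa using hp
    | succ n ihn =>
      intro hle
      rw [Nat.succ_mul] at hle ⊢
      exact hstep_a (n * d) (ihn (by omega)) (by omega)
  have ind_c : ∀ j, j * d ≤ M → comp bar a <+: w.drop (M - j * d) := by
    intro j
    induction j with
    | zero => intro _; simpa using hcM
    | succ n ihn =>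
      intro hle
      rw [Nat.succ_mul] at hle ⊢
      have h0 := hstep_c (M - n * d) (ihn (by omega)) (by omega)
      rwa [show M - n * d - d = M - (n * d + d) by omega] at h0
  have hqle : M / d * d ≤ M := Nat.div_mul_le_self M d
  have haq : a <+: w.drop (M / d * d) :=
    ind_a (M / d) (by
      calc M / d * d + a.length ≤ M + a.length := Nat.add_le_add_right hqle _
      _ = w.length := hMa)
  have hcs : comp bar a <+: w.drop (M - M / d * d) := ind_c (M / d) hqle
  have hfin := hz _ _ (lift _ _ haq) (lift _ _ hcs)
  have hdm := Nat.div_add_mod M d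
  rw [Nat.mul_comm] at hdm
  have hmlt : M % d < d := Nat.mod_lt _ (by omega)
  have h1d : 1 ≤ M / d := (Nat.one_le_div_iff (by omega)).mpr hdM
  have hQd : d ≤ M / d * d := by
    calc d = 1 * d := (one_mul d).symm
    _ ≤ M / d * d := Nat.mul_le_mul_right d h1d
  generalize hQ : M / d * d = Q at hdm hfin hqle hQd
  generalize hR : M % d = R at hdm hmlt
  omega


theorem stmt3 (bar : S → S) (hbar : Function.Involutive bar)
    (a w : List S) (ha : a ≠ comp bar a)
    (hp : a <+: w) (hs : comp bar a <:+ w)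
    (hnc : NonCrossing bar a w) :
    ∀ z ∈ HCstar bar a w, ∃! i : ℕ, w <+: z.drop i := by
  have ha_ne : a ≠ [] := by
    intro h
    exact ha (by simp [h, comp])
  have inv : ∀ z, Relation.ReflTransGen (HC bar a) w z →
      NonCrossing bar a z ∧ ∃ i, w <+: z.drop i := by
    intro z hz
    induction hz with
    | refl => exact ⟨hnc, 0, by simpa using List.prefix_refl w⟩
    | @tail b c hwb hbc ih =>
      obtain ⟨ihnc, i, hiw⟩ := ih
      refine ⟨nc_HC bar hbar ha_ne ihnc hbc, ?_⟩
      rcases hbc with hrh | hlh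
      · obtain ⟨γ, β, h1, h2⟩ := hrh
        subst h2
        exact ⟨i, occ_append_right hiw⟩
      · obtain ⟨γ, β, h1, h2⟩ := hlh
        subst h2
        exact ⟨γ.length + i, occ_lift hiw (show γ ++ b = γ ++ b ++ [] by simp)⟩
  intro z hzs
  obtain ⟨hncz, i0, hi0⟩ := inv z hzs
  refine ⟨i0, hi0, ?_⟩
  intro y hy
  rcases lt_trichotomy y i0 with h | h | h
  · exact (no_double bar hbar ha_ne hp hs hncz hy hi0 h).elim
  · exact h
  · exact (no_double bar hbar ha_ne hp hs hncz hi0 hy h).elim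

end Hairpin
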